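/- Let a, b ∈ ℝ with a² < b², ω = √(b²−a²), and u(t) = α(cosh(ωt) − ((a+b)/ω) sinh(ωt)) for some α ∈ ℝ. Then u satisfies u'(t) + a·u(−t) + b·u(t) = 0 for all t ∈ ℝ. -/

import Mathlib

theorem reflection_eq_solution_C2 (a b : ℝ) (h : a^2 < b^2) (α : ℝ)
    (ω : ℝ) (hω : ω = Real.sqrt (b^2 - a^2))
    (u : ℝ → ℝ)
    (hu : ∀ t, u t = α * (Real.cosh (ω * t) - ((a + b) / ω) * Real.sinh (ω * t))) :
    ∀ t : ℝ, deriv u t + a * u (-t) + b * u t = 0 := by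
  have hpos : (0:ℝ) < b^2 - a^2 := by linarith
  have hω2 : ω^2 = b^2 - a^2 := by
    rw [hω, Real.sq_sqrt hpos.le]
  have hωne : ω ≠ 0 := by
    intro h0; rw [h0] at hω2; simp at hω2; nlinarith
  intro t
  have hd : HasDerivAt u (α * (ω * Real.sinh (ω * t) - ((a + b) / ω) * (ω * Real.cosh (ω * t)))) t := by
    have h1 : HasDerivAt (fun t : ℝ => ω * t) ω t := by
      simpa using (hasDerivAt_id t).const_mul ω
    have hc : HasDerivAt (fun t : ℝ => Real.cosh (ω * t)) (Real.sinh (ω * t) * ω) t :=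
      (Real.hasDerivAt_cosh (ω * t)).comp t h1
    have hs : HasDerivAt (fun t : ℝ => Real.sinh (ω * t)) (Real.cosh (ω * t) * ω) t :=
      (Real.hasDerivAt_sinh (ω * t)).comp t h1
    have := ((hc.sub (hs.const_mul ((a + b) / ω))).const_mul α)
    have heq : u = fun t => α * (Real.cosh (ω * t) - ((a + b) / ω) * Real.sinh (ω * t)) :=
      funext hu
    rw [heq]
    exact this.congr_deriv (by ring)
  rw [hd.deriv, hu (-t), hu t]
  rw [show ω * -t = -(ω * t) by ring, Real.cosh_neg, Real.sinh_neg]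
  have key : (a + b) / ω * ω = a + b := div_mul_cancel₀ _ hωne
  have key2 : (a + b) / ω * (b^2 - a^2) = (a + b) * ω := by
    rw [← hω2]; field_simp
  have key3 : (a + b) / ω * (a - b) = -ω := by
    field_simp
    nlinarith [hω2]
  linear_combination α * Real.sinh (ω * t) * key3 - α * Real.cosh (ω * t) * key
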